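/- arXiv:0712.0042 — 4 statements merged into one kernel-verified Lean document; each statement's English description precedes it below -/
import Mathlib

section
/- For every nonnegative integer r and real x with |x| < 1, the r-th derivative of the function x ↦ ∑_{t=0}^∞ x^t H(t) equals (r!/(1-x)^{r+1})·(H(r) - ln(1-x)), where H is the harmonic number function with H(0)=0. -/
/-- The `t`-th harmonic number, with `H(0) = 0`. -/
noncomputable def H (t : ℕ) : ℝ := ∑ ℓ ∈ Finset.range t, (1 : ℝ) / (ℓ + 1)

open Filter Real

lemma tsum_harmonic_eq {x : ℝ} (hx : |x| < 1) :
    ∑' t : ℕ, x ^ t * H t = -Real.log (1 - x) / (1 - x) := by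
  have hx' := abs_lt.1 hx
  have hx1 : (1 : ℝ) - x ≠ 0 := by linarith [hx'.2]
  have hf : Summable fun n : ℕ => ‖x ^ (n + 1) / (n + 1)‖ := by
    apply Summable.of_nonneg_of_le (fun n => norm_nonneg _)
      (fun n => ?_) (summable_geometric_of_lt_one (abs_nonneg x) hx)
    rw [norm_div, norm_pow, Real.norm_eq_abs, Real.norm_eq_abs,
      abs_of_pos (show (0:ℝ) < (n:ℝ) + 1 by positivity)]
    calc |x| ^ (n + 1) / ((n : ℝ) + 1) ≤ |x| ^ (n + 1) / 1 := by
          apply div_le_div_of_nonneg_left (by positivity) one_pos (by simp)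
      _ = |x| ^ n * |x| := by rw [div_one, pow_succ]
      _ ≤ |x| ^ n * 1 := mul_le_mul_of_nonneg_left (le_of_lt hx) (by positivity)
      _ = |x| ^ n := mul_one _
  have hg : Summable fun n : ℕ => ‖x ^ n‖ := by
    simpa [Real.norm_eq_abs, abs_pow] using
      summable_geometric_of_lt_one (abs_nonneg x) hx
  have hterm : ∀ n : ℕ, ∑ k ∈ Finset.range (n + 1), x ^ (k + 1) / (k + 1) * x ^ (n - k)
      = x ^ (n + 1) * H (n + 1) := by
    intro n
    rw [H, Finset.mul_sum]
    apply Finset.sum_congr rfl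
    intro k hk
    have hk' : k ≤ n := Nat.lt_succ_iff.mp (Finset.mem_range.mp hk)
    have hpow : x ^ (k + 1) * x ^ (n - k) = x ^ (n + 1) := by
      rw [← pow_add]; congr 1; omega
    rw [div_mul_eq_mul_div, hpow, mul_one_div]
  have hsum0 : Summable fun n : ℕ => x ^ (n + 1) * H (n + 1) := by
    have := (summable_norm_sum_mul_range_of_summable_norm hf hg).of_norm
    exact this.congr hterm
  have hsum : Summable fun t : ℕ => x ^ t * H t :=
    (summable_nat_add_iff 1).mp hsum0
  have hcauchy := tsum_mul_tsum_eq_tsum_sum_range_of_summable_norm hf hg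
  rw [(hasSum_pow_div_log_of_abs_lt_one hx).tsum_eq,
    tsum_geometric_of_abs_lt_one hx, tsum_congr hterm] at hcauchy
  rw [Summable.tsum_eq_zero_add hsum, ← hcauchy]
  simp [H, div_eq_mul_inv]

lemma hasDerivAt_formula (r : ℕ) {y : ℝ} (hy : |y| < 1) :
    HasDerivAt (fun z : ℝ => (Nat.factorial r : ℝ) / (1 - z) ^ (r + 1) * (H r - Real.log (1 - z)))
      ((Nat.factorial (r + 1) : ℝ) / (1 - y) ^ (r + 2) * (H (r + 1) - Real.log (1 - y))) y := by
  have hy' := abs_lt.1 hy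
  have hy1 : (1 : ℝ) - y ≠ 0 := by linarith [hy'.2]
  have h1 : HasDerivAt (fun z : ℝ => 1 - z) (-1) y := by
    simpa using (hasDerivAt_id y).const_sub 1
  have hlog : HasDerivAt (fun z : ℝ => Real.log (1 - z)) (-1 / (1 - y)) y :=
    h1.log hy1
  have hu : HasDerivAt (fun z : ℝ => H r - Real.log (1 - z)) (1 / (1 - y)) y := by
    have h2 : HasDerivAt (_ : ℝ → ℝ) _ y := (hasDerivAt_const y (H r)).fun_sub hlog
    convert h2 using 1
    ring
  have hv : HasDerivAt (fun z : ℝ => (1 - z) ^ (r + 1))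
      ((r + 1 : ℕ) * (1 - y) ^ r * (-1)) y := by
    have h3 : HasDerivAt (_ : ℝ → ℝ) _ y := h1.fun_pow (r + 1)
    simpa using h3
  have hd : HasDerivAt (_ : ℝ → ℝ) _ y := (hu.fun_div hv (pow_ne_zero _ hy1)).const_mul (Nat.factorial r : ℝ)
  convert hd using 1
  · funext z; ring
  · have hH : H (r + 1) = H r + 1 / (r + 1) := by
      rw [H, Finset.sum_range_succ, ← H]
    have hfac : (Nat.factorial (r + 1) : ℝ) = (r + 1) * Nat.factorial r := by
      rw [Nat.factorial_succ]; push_cast; ring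
    rw [hH, hfac]
    field_simp
    push_cast
    ring

/-- For `|x| < 1`, the `r`-th derivative of `x ↦ ∑_{t=0}^∞ x^t H(t)` equals
`(r!/(1-x)^{r+1}) (H(r) - ln(1-x))`. -/
theorem iteratedDeriv_harmonic_series (r : ℕ) (x : ℝ) (hx : |x| < 1) :
    iteratedDeriv r (fun y : ℝ => ∑' t : ℕ, y ^ t * H t) x =
      (Nat.factorial r : ℝ) / (1 - x) ^ (r + 1) * (H r - Real.log (1 - x)) := by
  induction r generalizing x with
  | zero =>
    rw [iteratedDeriv_zero, tsum_harmonic_eq hx]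
    simp only [Nat.factorial_zero, Nat.cast_one, pow_one, H, Finset.range_zero,
      Finset.sum_empty, zero_sub]
    ring
  | succ r ih =>
    rw [iteratedDeriv_succ]
    have hopen : IsOpen {y : ℝ | |y| < 1} :=
      isOpen_lt (continuous_abs) continuous_const
    have hev : (iteratedDeriv r (fun y : ℝ => ∑' t : ℕ, y ^ t * H t)) =ᶠ[nhds x]
        (fun z : ℝ => (Nat.factorial r : ℝ) / (1 - z) ^ (r + 1) * (H r - Real.log (1 - z))) := by
      filter_upwards [hopen.mem_nhds hx] with y hy
      exact ih y hy
    rw [hev.deriv_eq]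
    exact (hasDerivAt_formula r hx).deriv
end

section
/- For real α > 0, b > 0 and a positive integer q, ∫_0^∞ ln(1 + α λ) λ^{q-1} e^{-bλ} dλ = (q-1)! · e^{b/α} · b^{-q} · ∑_{h=1}^q E_h(b/α), where E_h(z) = ∫_1^∞ e^{-zt}/t^h dt is the generalized exponential integral. -/
open MeasureTheory

/-- The generalized exponential integral `E_h(z) = ∫_1^∞ e^{-z t} / t^h dt`. -/
noncomputable def expInt (h : ℕ) (z : ℝ) : ℝ :=
  ∫ t in Set.Ioi (1 : ℝ), Real.exp (-z * t) / t ^ h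

section Aux
open Real Set Filter Topology


/-- `x^n e^{-cx}` is integrable on `(0,∞)`. -/
lemma aux_int_pow_exp (n : ℕ) {c : ℝ} (hc : 0 < c) :
    IntegrableOn (fun x : ℝ => x ^ n * Real.exp (-c * x)) (Ioi 0) := by
  have h := integrableOn_rpow_mul_exp_neg_mul_rpow (p := 1) (s := n) (b := c)
    (neg_one_lt_zero.trans_le (Nat.cast_nonneg n)) zero_lt_one hc
  refine h.congr_fun (fun x hx => ?_) measurableSet_Ioi
  dsimp only
  rw [Real.rpow_one, Real.rpow_natCast]

/-- Value `∫_0^∞ x^n e^{-cx} dx = n!/c^{n+1}`. -/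
lemma aux_integral_pow_exp (n : ℕ) {c : ℝ} (hc : 0 < c) :
    ∫ x in Ioi (0:ℝ), x ^ n * Real.exp (-c * x) = n.factorial / c ^ (n + 1) := by
  have h := integral_rpow_mul_exp_neg_mul_Ioi (a := n + 1) (r := c) (by positivity) hc
  rw [show ((n:ℝ) + 1) - 1 = (n:ℝ) by ring] at h
  have h2 : ∫ x in Ioi (0:ℝ), x ^ n * Real.exp (-c * x)
      = ∫ t in Ioi (0:ℝ), t ^ ((n:ℝ)) * Real.exp (-(c * t)) := by
    refine setIntegral_congr_fun measurableSet_Ioi (fun x hx => ?_)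
    rw [Real.rpow_natCast, neg_mul]
  rw [h2, h]
  rw [show ((n:ℝ) + 1) = ((n + 1 : ℕ) : ℝ) by push_cast; ring, Real.rpow_natCast]
  rw [show (((n + 1 : ℕ) : ℝ)) = ((n:ℝ) + 1) by push_cast; ring, Real.Gamma_nat_eq_factorial]
  rw [div_pow, one_pow]
  ring

/-- Translation for integrals over `Ioi`. -/
lemma aux_shift (f : ℝ → ℝ) (a d : ℝ) :
    ∫ x in Ioi (a + d), f x = ∫ x in Ioi a, f (x + d) := by
  have h := (measurePreserving_add_right (volume : Measure ℝ) d).setIntegral_preimage_emb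
    (MeasurableEquiv.addRight d).measurableEmbedding f (Ioi (a + d))
  rw [← h]
  congr 1
  ext x
  simp [MeasurableEquiv.addRight]

/-- `∫_1^∞ e^{-zt}(t-1)^m dt = m! e^{-z} / z^{m+1}`. -/
lemma aux_C (m : ℕ) {z : ℝ} (hz : 0 < z) :
    ∫ t in Ioi (1:ℝ), Real.exp (-z * t) * (t - 1) ^ m
      = m.factorial / z ^ (m + 1) * Real.exp (-z) := by
  have h := aux_shift (fun t => Real.exp (-z * t) * (t - 1) ^ m) 0 1
  rw [zero_add] at h
  rw [h]
  have : ∀ x ∈ Ioi (0:ℝ), Real.exp (-z * (x + 1)) * (x + 1 - 1) ^ m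
      = Real.exp (-z) * (x ^ m * Real.exp (-z * x)) := by
    intro x hx
    rw [show -z * (x + 1) = -z * x + -z by ring, Real.exp_add]
    ring
  rw [setIntegral_congr_fun measurableSet_Ioi this, integral_const_mul,
    aux_integral_pow_exp m hz]
  ring

/-- Generic domination criterion on `Ioi 1`. -/
lemma aux_integrableOn_of_le_pow_exp {f : ℝ → ℝ} (m : ℕ) {z : ℝ} (hz : 0 < z)
    (hf : ContinuousOn f (Ioi 1))
    (hb : ∀ t ∈ Ioi (1:ℝ), |f t| ≤ t ^ m * Real.exp (-z * t)) :
    IntegrableOn f (Ioi 1) := by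
  have hD : IntegrableOn (fun t : ℝ => t ^ m * Real.exp (-z * t)) (Ioi 1) :=
    (aux_int_pow_exp m hz).mono_set (Ioi_subset_Ioi zero_le_one)
  refine hD.integrable.mono (hf.aestronglyMeasurable measurableSet_Ioi) ?_
  filter_upwards [ae_restrict_mem measurableSet_Ioi] with t ht
  rw [Real.norm_eq_abs, Real.norm_eq_abs]
  exact (hb t ht).trans (le_abs_self _)

lemma aux_int_expInt (h : ℕ) {z : ℝ} (hz : 0 < z) :
    IntegrableOn (fun t : ℝ => Real.exp (-z * t) / t ^ h) (Ioi 1) := by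
  refine aux_integrableOn_of_le_pow_exp 0 hz ?_ ?_
  · exact (continuous_exp.comp (continuous_const.mul continuous_id)).continuousOn.div
      (continuousOn_pow h)
      (fun t ht => pow_ne_zero _ (zero_lt_one.trans (mem_Ioi.mp ht)).ne')
  · intro t ht
    have ht1 : (1:ℝ) < t := ht
    have h1 : (1:ℝ) ≤ t ^ h := one_le_pow₀ ht1.le
    rw [abs_of_nonneg (by positivity), pow_zero, one_mul]
    calc Real.exp (-z * t) / t ^ h ≤ Real.exp (-z * t) / 1 :=
        div_le_div_of_nonneg_left (Real.exp_pos _).le zero_lt_one h1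
      _ = Real.exp (-z * t) := div_one _

lemma aux_int_A (q : ℕ) {z : ℝ} (hz : 0 < z) :
    IntegrableOn (fun t : ℝ => Real.exp (-z * t) * (t - 1) ^ q / t) (Ioi 1) := by
  refine aux_integrableOn_of_le_pow_exp q hz ?_ ?_
  · exact (((continuous_exp.comp (continuous_const.mul continuous_id)).mul
      ((continuous_id.sub continuous_const).pow q)).continuousOn).div
      continuousOn_id (fun t ht => (zero_lt_one.trans (mem_Ioi.mp ht)).ne')
  · intro t ht
    have ht1 : (1:ℝ) < t := ht
    have h0 : (0:ℝ) < t := zero_lt_one.trans ht1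
    have hnn : (0:ℝ) ≤ t - 1 := by linarith
    have hnum : (0:ℝ) ≤ Real.exp (-z * t) * (t - 1) ^ q :=
      mul_nonneg (Real.exp_pos _).le (pow_nonneg hnn q)
    rw [abs_of_nonneg (div_nonneg hnum h0.le)]
    have h1 : (t - 1) ^ q ≤ t ^ q := pow_le_pow_left₀ hnn (by linarith) q
    calc Real.exp (-z * t) * (t - 1) ^ q / t ≤ Real.exp (-z * t) * (t - 1) ^ q / 1 :=
        div_le_div_of_nonneg_left hnum zero_lt_one ht1.le
      _ = Real.exp (-z * t) * (t - 1) ^ q := div_one _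
      _ ≤ Real.exp (-z * t) * t ^ q := by
          exact mul_le_mul_of_nonneg_left h1 (Real.exp_pos _).le
      _ = t ^ q * Real.exp (-z * t) := mul_comm _ _

lemma aux_int_C (m : ℕ) {z : ℝ} (hz : 0 < z) :
    IntegrableOn (fun t : ℝ => Real.exp (-z * t) * (t - 1) ^ m) (Ioi 1) := by
  refine aux_integrableOn_of_le_pow_exp m hz ?_ ?_
  · exact ((continuous_exp.comp (continuous_const.mul continuous_id)).mul
      ((continuous_id.sub continuous_const).pow m)).continuousOn
  · intro t ht
    have ht1 : (1:ℝ) < t := ht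
    have hnn : (0:ℝ) ≤ t - 1 := by linarith
    rw [abs_of_nonneg (mul_nonneg (Real.exp_pos _).le (pow_nonneg hnn m))]
    calc Real.exp (-z * t) * (t - 1) ^ m ≤ Real.exp (-z * t) * t ^ m :=
        mul_le_mul_of_nonneg_left (pow_le_pow_left₀ hnn (by linarith) m)
          (Real.exp_pos _).le
      _ = t ^ m * Real.exp (-z * t) := mul_comm _ _

/-- Recurrence `z E_h(z) + h E_{h+1}(z) = e^{-z}`. -/
lemma aux_rec (h : ℕ) {z : ℝ} (hz : 0 < z) :
    z * expInt h z + (h:ℝ) * expInt (h+1) z = Real.exp (-z) := by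
  set g : ℝ → ℝ := fun t => Real.exp (-z * t) * t ^ (-(h:ℤ)) with hg
  set g' : ℝ → ℝ := fun t =>
    -(z * (Real.exp (-z*t) / t ^ h) + (h:ℝ) * (Real.exp (-z*t) / t ^ (h+1))) with hg'
  have hderiv : ∀ x ∈ Ici (1:ℝ), HasDerivAt g (g' x) x := by
    intro x hx
    have hx0 : (0:ℝ) < x := lt_of_lt_of_le zero_lt_one hx
    have H := ((Real.hasDerivAt_exp (-z*x)).comp x
      ((hasDerivAt_id x).const_mul (-z))).mul (hasDerivAt_zpow (-(h:ℤ)) x (Or.inl hx0.ne'))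
    refine H.congr_deriv ?_
    symm
    simp only [hg', id_eq, mul_one, Function.comp_apply]
    rw [zpow_neg, zpow_natCast, show (-(h:ℤ) - 1) = -((h:ℤ)+1) by ring, zpow_neg,
      show ((h:ℤ)+1) = ((h+1:ℕ):ℤ) by push_cast; ring, zpow_natCast]
    field_simp
    push_cast
    ring
  have htend : Tendsto g atTop (𝓝 0) := by
    apply squeeze_zero' (f := g) (g := fun t => Real.exp (-z * t))
    · filter_upwards [eventually_ge_atTop (1:ℝ)] with t ht
      have ht0 : (0:ℝ) < t := lt_of_lt_of_le zero_lt_one ht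
      exact mul_nonneg (Real.exp_pos _).le (zpow_nonneg ht0.le _)
    · filter_upwards [eventually_ge_atTop (1:ℝ)] with t ht
      have ht0 : (0:ℝ) < t := lt_of_lt_of_le zero_lt_one ht
      have : t ^ (-(h:ℤ)) ≤ 1 := by
        rw [zpow_neg, zpow_natCast]
        exact inv_le_one_of_one_le₀ (one_le_pow₀ ht)
      calc Real.exp (-z * t) * t ^ (-(h:ℤ)) ≤ Real.exp (-z * t) * 1 :=
          mul_le_mul_of_nonneg_left this (Real.exp_pos _).le
        _ = Real.exp (-z * t) := mul_one _
    · have : Tendsto (fun t : ℝ => -z * t) atTop atBot :=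
        tendsto_id.const_mul_atTop_of_neg (neg_neg_iff_pos.mpr hz)
      exact Real.tendsto_exp_atBot.comp this
  have hint : IntegrableOn g' (Ioi 1) := by
    apply Integrable.neg
    exact ((aux_int_expInt h hz).const_mul z).add ((aux_int_expInt (h+1) hz).const_mul (h:ℝ))
  have := integral_Ioi_of_hasDerivAt_of_tendsto' hderiv hint htend
  have hg1 : g 1 = Real.exp (-z) := by simp [hg]
  rw [hg1] at this
  have hsplit : ∫ x in Ioi (1:ℝ), g' x
      = -(z * expInt h z + (h:ℝ) * expInt (h+1) z) := by
    rw [hg']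
    rw [integral_neg, integral_add ((aux_int_expInt h hz).const_mul z)
      ((aux_int_expInt (h+1) hz).const_mul (h:ℝ)), integral_const_mul, integral_const_mul]
    rfl
  rw [hsplit] at this
  linarith

/-- `∫_1^∞ e^{-zt}(t-1)^q/t dt = q!/z^q · E_{q+1}(z)`. -/
lemma aux_A (q : ℕ) {z : ℝ} (hz : 0 < z) :
    ∫ t in Ioi (1:ℝ), Real.exp (-z * t) * (t - 1) ^ q / t
      = q.factorial / z ^ q * expInt (q+1) z := by
  induction q with
  | zero =>
      simp only [pow_zero, mul_one, Nat.factorial_zero, Nat.cast_one, div_one]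
      rw [one_mul, expInt]
      exact setIntegral_congr_fun measurableSet_Ioi (fun t ht => by rw [pow_one])
  | succ q ih =>
      have hsplit : ∀ t ∈ Ioi (1:ℝ),
          Real.exp (-z * t) * (t - 1) ^ (q+1) / t
            = Real.exp (-z * t) * (t - 1) ^ q - Real.exp (-z * t) * (t - 1) ^ q / t := by
        intro t ht
        have ht0 : (0:ℝ) < t := lt_trans zero_lt_one ht
        field_simp
        ring
      rw [setIntegral_congr_fun measurableSet_Ioi hsplit,
        integral_sub (aux_int_C q hz) (aux_int_A q hz), aux_C q hz, ih]
      have hrec := aux_rec (q+1) hz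
      push_cast at hrec ⊢
      rw [Nat.factorial_succ]
      push_cast
      have hz' : z ≠ 0 := hz.ne'
      field_simp
      linear_combination (-(z ^ q)) * hrec

/-- `∫_0^∞ α l^q/(1+αl) e^{-bl} dl = q! e^{b/α} b^{-q} E_{q+1}(b/α)`. -/
lemma aux_J (q : ℕ) {α b : ℝ} (hα : 0 < α) (hb : 0 < b) :
    ∫ l in Ioi (0:ℝ), α * l ^ q / (1 + α * l) * Real.exp (-b * l)
      = q.factorial * Real.exp (b/α) / b ^ q * expInt (q+1) (b/α) := by
  have hz : 0 < b / α := div_pos hb hα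
  set g : ℝ → ℝ := fun u => α * (u/α) ^ q / (1 + u) * Real.exp (-(b/α) * u) with hgdef
  have h1 : (fun l : ℝ => α * l ^ q / (1 + α * l) * Real.exp (-b * l))
      = fun l => g (α * l) := by
    funext l
    simp only [hgdef]
    rw [mul_div_cancel_left₀ _ hα.ne']
    congr 1
    rw [show -(b/α) * (α * l) = -b * l by field_simp]
  rw [h1, integral_comp_mul_left_Ioi g 0 hα, mul_zero]
  have h2 : ∫ x in Ioi (0:ℝ), g x = ∫ t in Ioi (1:ℝ), g (t - 1) := by
    have := aux_shift (fun t => g (t - 1)) 0 1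
    rw [zero_add] at this
    rw [this]
    simp
  rw [h2]
  have h3 : ∀ t ∈ Ioi (1:ℝ), g (t - 1)
      = (Real.exp (b/α) * α / α ^ q) * (Real.exp (-(b/α) * t) * (t - 1) ^ q / t) := by
    intro t ht
    have ht0 : (0:ℝ) < t := lt_trans zero_lt_one ht
    simp only [hgdef]
    rw [show (1 + (t - 1)) = t by ring, div_pow, show -(b/α) * (t - 1) = -(b/α)*t + b/α by ring,
      Real.exp_add]
    field_simp
  rw [setIntegral_congr_fun measurableSet_Ioi h3, integral_const_mul, aux_A q hz]
  rw [smul_eq_mul, expInt]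
  have hαq : (α:ℝ) ^ q ≠ 0 := pow_ne_zero _ hα.ne'
  generalize (∫ t in Ioi (1:ℝ), Real.exp (-(b/α) * t) / t ^ (q+1)) = I
  field_simp
  rw [← mul_pow, mul_div_assoc', mul_div_right_comm, div_self hα.ne', one_mul]
  ring

lemma aux_tendsto_pow_exp (m : ℕ) {c : ℝ} (hc : 0 < c) :
    Tendsto (fun x : ℝ => x ^ m * Real.exp (-c * x)) atTop (𝓝 0) := by
  apply (tendsto_rpow_mul_exp_neg_mul_atTop_nhds_zero m c hc).congr'
  filter_upwards [eventually_gt_atTop (0:ℝ)] with x hx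
  rw [Real.rpow_natCast]

section MainAux
variable {α b : ℝ} (hα : 0 < α) (hb : 0 < b)

include hα in
lemma aux_cont_log : ContinuousOn (fun l : ℝ => Real.log (1 + α * l)) (Ioi 0) := by
  apply ContinuousOn.log
  · exact (continuous_const.add (continuous_const.mul continuous_id)).continuousOn
  · intro x hx
    have hx0 : (0:ℝ) < x := hx
    nlinarith

include hα hb in
lemma aux_int_L (n : ℕ) :
    IntegrableOn (fun l : ℝ => Real.log (1 + α * l) * l ^ n * Real.exp (-b * l)) (Ioi 0) := by
  have hD : IntegrableOn (fun x : ℝ => α * (x ^ (n+1) * Real.exp (-b * x))) (Ioi 0) :=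
    (aux_int_pow_exp (n+1) hb).const_mul α
  refine hD.integrable.mono ?_ ?_
  · exact (((aux_cont_log hα).mul (continuousOn_pow n)).mul
      (continuous_exp.comp (continuous_const.mul continuous_id)).continuousOn).aestronglyMeasurable
      measurableSet_Ioi
  · filter_upwards [ae_restrict_mem measurableSet_Ioi] with x hx
    have hx0 : (0:ℝ) < x := hx
    have h1 : (0:ℝ) < 1 + α * x := by nlinarith
    have hlog0 : 0 ≤ Real.log (1 + α * x) := Real.log_nonneg (by nlinarith)
    have hlog1 : Real.log (1 + α * x) ≤ α * x :=
      (Real.log_le_sub_one_of_pos h1).trans (by ring_nf; exact le_refl _)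
    rw [Real.norm_eq_abs, Real.norm_eq_abs,
      abs_of_nonneg (by positivity : (0:ℝ) ≤ Real.log (1 + α * x) * x ^ n * Real.exp (-b*x)),
      abs_of_nonneg (by positivity)]
    calc Real.log (1 + α * x) * x ^ n * Real.exp (-b * x)
        ≤ (α * x) * x ^ n * Real.exp (-b * x) := by
          apply mul_le_mul_of_nonneg_right (mul_le_mul_of_nonneg_right hlog1 (by positivity))
            (Real.exp_pos _).le
      _ = α * (x ^ (n+1) * Real.exp (-b * x)) := by ring

include hα hb in
lemma aux_int_F (q : ℕ) :
    IntegrableOn (fun l : ℝ => α * l ^ q / (1 + α * l) * Real.exp (-b * l)) (Ioi 0) := by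
  have hD : IntegrableOn (fun x : ℝ => α * (x ^ q * Real.exp (-b * x))) (Ioi 0) :=
    (aux_int_pow_exp q hb).const_mul α
  refine hD.integrable.mono ?_ ?_
  · have hcont : ContinuousOn (fun l : ℝ => α * l ^ q / (1 + α * l) * Real.exp (-b * l)) (Ioi 0) := by
      apply ContinuousOn.mul
      · apply ContinuousOn.div
        · exact (continuous_const.mul (continuous_pow q)).continuousOn
        · exact (continuous_const.add (continuous_const.mul continuous_id)).continuousOn
        · intro x hx; have hx0 : (0:ℝ) < x := hx; nlinarith
      · exact (continuous_exp.comp (continuous_const.mul continuous_id)).continuousOn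
    exact hcont.aestronglyMeasurable measurableSet_Ioi
  · filter_upwards [ae_restrict_mem measurableSet_Ioi] with x hx
    have hx0 : (0:ℝ) < x := hx
    have h1 : (1:ℝ) ≤ 1 + α * x := by nlinarith
    have h0 : (0:ℝ) < 1 + α * x := by linarith
    rw [Real.norm_eq_abs, Real.norm_eq_abs, abs_of_nonneg (by positivity),
      abs_of_nonneg (by positivity)]
    calc α * x ^ q / (1 + α * x) * Real.exp (-b * x)
        ≤ α * x ^ q / 1 * Real.exp (-b * x) := by
          apply mul_le_mul_of_nonneg_right _ (Real.exp_pos _).le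
          exact div_le_div_of_nonneg_left (by positivity) one_pos h1
      _ = α * (x ^ q * Real.exp (-b * x)) := by ring

include hα hb in
lemma aux_tendsto_L (n : ℕ) :
    Tendsto (fun l : ℝ => Real.log (1 + α * l) * l ^ n * Real.exp (-b * l)) atTop (𝓝 0) := by
  apply squeeze_zero' (g := fun l : ℝ => α * (l ^ (n+1) * Real.exp (-b * l)))
  · filter_upwards [eventually_gt_atTop (0:ℝ)] with x hx
    have hlog0 : 0 ≤ Real.log (1 + α * x) := Real.log_nonneg (by nlinarith)
    positivity
  · filter_upwards [eventually_gt_atTop (0:ℝ)] with x hx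
    have h1 : (0:ℝ) < 1 + α * x := by nlinarith
    have hlog1 : Real.log (1 + α * x) ≤ α * x :=
      (Real.log_le_sub_one_of_pos h1).trans (by ring_nf; exact le_refl _)
    calc Real.log (1 + α * x) * x ^ n * Real.exp (-b * x)
        ≤ (α * x) * x ^ n * Real.exp (-b * x) :=
          mul_le_mul_of_nonneg_right (mul_le_mul_of_nonneg_right hlog1 (by positivity))
            (Real.exp_pos _).le
      _ = α * (x ^ (n+1) * Real.exp (-b * x)) := by ring
  · simpa using (aux_tendsto_pow_exp (n+1) hb).const_mul α

include hα in
lemma aux_hlog_deriv (x : ℝ) (hx : 0 ≤ x) :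
    HasDerivAt (fun l : ℝ => Real.log (1 + α * l)) (α / (1 + α * x)) x := by
  have hpos : (0:ℝ) < 1 + α * x := by nlinarith
  have hin : HasDerivAt (fun l : ℝ => 1 + α * l) α x := by
    simpa using ((hasDerivAt_id x).const_mul α).const_add 1
  have := (Real.hasDerivAt_log hpos.ne').comp x hin
  rw [div_eq_inv_mul]; exact this

lemma aux_hexp_deriv (x : ℝ) :
    HasDerivAt (fun l : ℝ => Real.exp (-b * l)) (Real.exp (-b * x) * (-b)) x := by
  have h : HasDerivAt (fun l : ℝ => -b * l) (-b) x := by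
    simpa using (hasDerivAt_id x).const_mul (-b)
  exact h.exp

end MainAux

lemma aux_main {α b : ℝ} (hα : 0 < α) (hb : 0 < b) (n : ℕ) :
    ∫ l in Ioi (0:ℝ), Real.log (1 + α * l) * l ^ n * Real.exp (-b * l)
      = (n.factorial : ℝ) * Real.exp (b / α) / b ^ (n+1)
          * ∑ h ∈ Finset.Icc 1 (n+1), expInt h (b/α) := by
  induction n with
  | zero =>
      set f : ℝ → ℝ := fun l => Real.log (1 + α * l) * (-Real.exp (-b * l) / b) with hfdef
      set f' : ℝ → ℝ := fun l =>
        (-1/b) * (α * l ^ 0 / (1 + α * l) * Real.exp (-b * l))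
          + Real.log (1 + α * l) * l ^ 0 * Real.exp (-b * l) with hf'def
      have hderiv : ∀ x ∈ Ici (0:ℝ), HasDerivAt f (f' x) x := by
        intro x hx
        have hx0 : (0:ℝ) ≤ x := hx
        have hpos : (0:ℝ) < 1 + α * x := by nlinarith
        have h1 := aux_hlog_deriv hα x hx0
        have h2 : HasDerivAt (fun l : ℝ => -Real.exp (-b * l) / b) (Real.exp (-b * x)) x := by
          have := ((aux_hexp_deriv (b := b) x).neg).div_const b
          refine this.congr_deriv ?_
          symm
          field_simp
        have := h1.mul h2
        refine this.congr_deriv ?_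
        symm
        simp only [hf'def, pow_zero]
        field_simp
      have f'int : IntegrableOn f' (Ioi 0) :=
        ((aux_int_F hα hb 0).const_mul (-1/b)).add (aux_int_L hα hb 0)
      have htend : Tendsto f atTop (𝓝 0) := by
        have : f = fun l => (Real.log (1 + α * l) * l ^ 0 * Real.exp (-b * l)) * (-1/b) := by
          funext l; simp only [hfdef, pow_zero]; ring
        rw [this]
        simpa using (aux_tendsto_L hα hb 0).mul_const (-1/b)
      have heq := integral_Ioi_of_hasDerivAt_of_tendsto' hderiv f'int htend
      have hf0 : f 0 = 0 := by simp [hfdef]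
      rw [hf0, sub_zero] at heq
      have hsplit : ∫ x in Ioi (0:ℝ), f' x
          = (-1/b) * (∫ l in Ioi (0:ℝ), α * l ^ 0 / (1 + α * l) * Real.exp (-b * l))
            + (∫ l in Ioi (0:ℝ), Real.log (1 + α * l) * l ^ 0 * Real.exp (-b * l)) := by
        rw [hf'def, integral_add ((aux_int_F hα hb 0).const_mul (-1/b)) (aux_int_L hα hb 0),
          integral_const_mul]
      rw [hsplit, aux_J 0 hα hb] at heq
      simp only [Nat.factorial_zero, Nat.cast_one, pow_zero, zero_add, pow_one,
        Finset.Icc_self, Finset.sum_singleton] at heq ⊢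
      have hb' : b ≠ 0 := hb.ne'
      field_simp at heq ⊢
      linarith
  | succ n ih =>
      set f : ℝ → ℝ := fun l => Real.log (1 + α * l) * l ^ (n+1) * Real.exp (-b * l) with hfdef
      set f' : ℝ → ℝ := fun l =>
        α * l ^ (n+1) / (1 + α * l) * Real.exp (-b * l)
          + (((n:ℝ)+1) * (Real.log (1 + α * l) * l ^ n * Real.exp (-b * l))
            - b * (Real.log (1 + α * l) * l ^ (n+1) * Real.exp (-b * l))) with hf'def
      have hderiv : ∀ x ∈ Ici (0:ℝ), HasDerivAt f (f' x) x := by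
        intro x hx
        have hx0 : (0:ℝ) ≤ x := hx
        have hpos : (0:ℝ) < 1 + α * x := by nlinarith
        have h1 := aux_hlog_deriv hα x hx0
        have h2 : HasDerivAt (fun l : ℝ => l ^ (n+1)) (((n:ℝ)+1) * x ^ n) x := by
          simpa using hasDerivAt_pow (n+1) x
        have h3 := aux_hexp_deriv (b := b) x
        have := (h1.mul h2).mul h3
        refine this.congr_deriv ?_
        symm
        simp only [hf'def, Pi.mul_apply]
        field_simp
        ring
      have hsub : Integrable (fun l : ℝ =>
          ((n:ℝ)+1) * (Real.log (1 + α * l) * l ^ n * Real.exp (-b * l))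
            - b * (Real.log (1 + α * l) * l ^ (n+1) * Real.exp (-b * l)))
          (volume.restrict (Ioi 0)) :=
        ((aux_int_L hα hb n).const_mul _).sub ((aux_int_L hα hb (n+1)).const_mul b)
      have f'int : IntegrableOn f' (Ioi 0) := (aux_int_F hα hb (n+1)).add hsub
      have htend : Tendsto f atTop (𝓝 0) := aux_tendsto_L hα hb (n+1)
      have heq := integral_Ioi_of_hasDerivAt_of_tendsto' hderiv f'int htend
      have hf0 : f 0 = 0 := by simp [hfdef]
      rw [hf0, sub_zero] at heq
      have hsplit : ∫ x in Ioi (0:ℝ), f' x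
          = (∫ l in Ioi (0:ℝ), α * l ^ (n+1) / (1 + α * l) * Real.exp (-b * l))
            + (((n:ℝ)+1) * (∫ l in Ioi (0:ℝ), Real.log (1 + α * l) * l ^ n * Real.exp (-b * l))
              - b * (∫ l in Ioi (0:ℝ), Real.log (1 + α * l) * l ^ (n+1) * Real.exp (-b * l))) := by
        rw [hf'def, integral_add (aux_int_F hα hb (n+1)) hsub,
          integral_sub ((aux_int_L hα hb n).const_mul _) ((aux_int_L hα hb (n+1)).const_mul b),
          integral_const_mul, integral_const_mul]
      rw [hsplit, aux_J (n+1) hα hb, ih] at heq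
      have hsum : ∑ h ∈ Finset.Icc 1 (n+2), expInt h (b/α)
          = (∑ h ∈ Finset.Icc 1 (n+1), expInt h (b/α)) + expInt (n+2) (b/α) :=
        Finset.sum_Icc_succ_top (by omega) _
      have hfact : (((n+1).factorial : ℕ) : ℝ) = ((n:ℝ)+1) * n.factorial := by
        rw [Nat.factorial_succ]; push_cast; ring
      rw [show n + 1 + 1 = n + 2 by omega] at heq
      rw [hfact] at heq
      show (∫ l in Ioi (0:ℝ), Real.log (1 + α * l) * l ^ (n+1) * Real.exp (-b * l))
          = (((n+1).factorial : ℕ) : ℝ) * Real.exp (b/α) / b ^ (n+2)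
              * ∑ h ∈ Finset.Icc 1 (n+2), expInt h (b/α)
      rw [hsum, hfact]
      have hb' : b ≠ 0 := hb.ne'
      field_simp at heq ⊢
      linear_combination -heq

end Aux

open Real Set Filter Topology in
/-- For `α > 0`, `b > 0`, and a positive integer `q`,
`∫_0^∞ ln(1+αλ) λ^{q-1} e^{-bλ} dλ = (q-1)! e^{b/α} b^{-q} ∑_{h=1}^q E_h(b/α)`. -/
theorem integral_log_mul_pow_mul_exp (α b : ℝ) (hα : 0 < α) (hb : 0 < b)
    (q : ℕ) (hq : 1 ≤ q) :
    ∫ l in Set.Ioi (0 : ℝ), Real.log (1 + α * l) * l ^ (q - 1) * Real.exp (-b * l) =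
      (Nat.factorial (q - 1) : ℝ) * Real.exp (b / α) * b ^ (-(q : ℤ)) *
        ∑ h ∈ Finset.Icc 1 q, expInt h (b / α) := by
  obtain ⟨n, rfl⟩ : ∃ n, q = n + 1 := ⟨q - 1, by omega⟩
  have h := aux_main hα hb n
  simp only [Nat.add_sub_cancel]
  rw [h, zpow_neg, zpow_natCast]
  ring
end

section
/- For integers a ≥ 1, t ≥ 0 and reals c > 0, f > 0, ∫_0^∞ x^{a + t/2 - 1} e^{-cx} I_t(2√(f x)) dx = ((t+a-1)!/c^{t/2+a}) · (f/c)^{t/2} · e^{f/c} · ∑_{r=0}^{a-1} C(a-1, r) · (f/c)^r / (t+r)!, where I_t is the modified Bessel function of the first kind of order t. -/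
open MeasureTheory

/-- The modified Bessel function of the first kind of integer order `t`:
`I_t(x) = ∑_{k=0}^∞ (x/2)^{t+2k} / (k! (t+k)!)`. -/
noncomputable def besselI (t : ℕ) (x : ℝ) : ℝ :=
  ∑' k : ℕ, (x / 2) ^ (t + 2 * k) / ((Nat.factorial k : ℝ) * Nat.factorial (t + k))

lemma term_id (t b r : ℕ) (hr : r ≤ b) :
    ((t+b).choose (b-r) : ℝ) * b.factorial * (t+r).factorial
      = (t+b).factorial * ((b.choose r : ℝ)) * r.factorial := by
  have e1 : t + b - (b - r) = t + r := by omega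
  rw [Nat.cast_choose ℝ (show b - r ≤ t + b by omega), Nat.cast_choose ℝ hr, e1]
  have h1 : ((b-r).factorial : ℝ) ≠ 0 := Nat.cast_ne_zero.mpr (Nat.factorial_ne_zero _)
  have h2 : ((t+r).factorial : ℝ) ≠ 0 := Nat.cast_ne_zero.mpr (Nat.factorial_ne_zero _)
  have h3 : ((r).factorial : ℝ) ≠ 0 := Nat.cast_ne_zero.mpr (Nat.factorial_ne_zero _)
  field_simp

lemma coeff_id (a t k : ℕ) (ha : 1 ≤ a) :
    ((t+a+k-1).factorial : ℝ) / (k.factorial * (t+k).factorial)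
      = ∑ r ∈ Finset.range a, ((t+a-1).factorial : ℝ) * ((a-1).choose r) * (k.choose r)
          * r.factorial / ((t+r).factorial * k.factorial) := by
  obtain ⟨b, rfl⟩ : ∃ b, a = b + 1 := ⟨a - 1, by omega⟩
  have e0 : t + (b+1) + k - 1 = t + b + k := by omega
  have e1 : t + (b+1) - 1 = t + b := by omega
  rw [e0, e1]
  simp only [Nat.add_sub_cancel]
  have hv : ((t+b) + k).choose b = ∑ r ∈ Finset.range (b+1), (t+b).choose (b-r) * k.choose r := by
    rw [Nat.add_choose_eq, Finset.Nat.sum_antidiagonal_eq_sum_range_succ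
      (f := fun i j => (t+b).choose i * k.choose j)]
    rw [← Finset.sum_range_reflect]
    refine Finset.sum_congr rfl fun r hrm => ?_
    have hr : r ≤ b := by simpa using Nat.lt_succ_iff.mp (Finset.mem_range.mp hrm)
    congr 1 <;> congr 1 <;> omega
  have hcast : ((t+b+k).factorial : ℝ) / (k.factorial * (t+k).factorial)
      = ((t+b+k).choose b : ℝ) * b.factorial / k.factorial := by
    rw [Nat.cast_choose ℝ (show b ≤ t+b+k by omega), (show t+b+k-b = t+k by omega)]
    have h1 : ((b).factorial : ℝ) ≠ 0 := Nat.cast_ne_zero.mpr (Nat.factorial_ne_zero _)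
    have h2 : ((t+k).factorial : ℝ) ≠ 0 := Nat.cast_ne_zero.mpr (Nat.factorial_ne_zero _)
    field_simp
  rw [hcast, (show t+b+k = (t+b)+k by ring), hv]
  push_cast
  rw [Finset.sum_mul, Finset.sum_div]
  refine Finset.sum_congr rfl fun r hrm => ?_
  have hr : r ≤ b := Nat.lt_succ_iff.mp (Finset.mem_range.mp hrm)
  have h := term_id t b r hr
  have h2 : ((t+r).factorial : ℝ) ≠ 0 := Nat.cast_ne_zero.mpr (Nat.factorial_ne_zero _)
  have h3 : ((k).factorial : ℝ) ≠ 0 := Nat.cast_ne_zero.mpr (Nat.factorial_ne_zero _)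
  field_simp
  linear_combination (k.choose r : ℝ) * h

lemma tsum_shift (u : ℝ) (r : ℕ) :
    ∑' k : ℕ, u ^ k * ((k.choose r : ℝ)) * r.factorial / k.factorial
      = u ^ r * Real.exp u := by
  set h : ℕ → ℝ := fun k => u ^ k * ((k.choose r : ℝ)) * r.factorial / k.factorial with hh
  have hinj : Function.Injective (fun m : ℕ => m + r) := add_left_injective r
  have hsupp : Function.support h ⊆ Set.range (fun m : ℕ => m + r) := by
    intro k hk
    by_contra hne
    apply hk
    have hkr : k < r := by
      by_contra hge
      exact hne ⟨k - r, show k - r + r = k by omega⟩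
    simp [hh, Nat.choose_eq_zero_of_lt hkr]
  have key : ∀ m : ℕ, h (m + r) = u ^ r * (u ^ m / m.factorial) := by
    intro m
    have hfac : ((m+r).choose r) * r.factorial * m.factorial = (m+r).factorial := by
      have := Nat.choose_mul_factorial_mul_factorial (show r ≤ m + r by omega)
      rwa [Nat.add_sub_cancel] at this
    have hfacR : ((m+r).choose r : ℝ) * r.factorial * m.factorial = (m+r).factorial := by
      exact_mod_cast congrArg (Nat.cast (R := ℝ)) hfac
    have hm : (m.factorial : ℝ) ≠ 0 := Nat.cast_ne_zero.mpr (Nat.factorial_ne_zero _)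
    have hmr : ((m+r).factorial : ℝ) ≠ 0 := Nat.cast_ne_zero.mpr (Nat.factorial_ne_zero _)
    simp only [hh, pow_add]
    field_simp
    linear_combination u ^ m * u ^ r * hfacR
  rw [← hinj.tsum_eq hsupp]
  simp only [key]
  rw [tsum_mul_left, Real.exp_eq_exp_ℝ, NormedSpace.exp_eq_tsum_div]

lemma summable_shift (u : ℝ) (r : ℕ) :
    Summable (fun k : ℕ => u ^ k * ((k.choose r : ℝ)) * r.factorial / k.factorial) := by
  set h : ℕ → ℝ := fun k => u ^ k * ((k.choose r : ℝ)) * r.factorial / k.factorial with hh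
  have hinj : Function.Injective (fun m : ℕ => m + r) := add_left_injective r
  have hzero : ∀ k ∉ Set.range (fun m : ℕ => m + r), h k = 0 := by
    intro k hne
    have hkr : k < r := by
      by_contra hge
      exact absurd ⟨k - r, show k - r + r = k by omega⟩ hne
    simp [hh, Nat.choose_eq_zero_of_lt hkr]
  rw [← hinj.summable_iff hzero]
  have heq : (h ∘ fun m : ℕ => m + r) = fun m => u ^ r * (u ^ m / m.factorial) := by
    funext m
    have hfac : ((m+r).choose r) * r.factorial * m.factorial = (m+r).factorial := by
      have := Nat.choose_mul_factorial_mul_factorial (show r ≤ m + r by omega)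
      rwa [Nat.add_sub_cancel] at this
    have hfacR : ((m+r).choose r : ℝ) * r.factorial * m.factorial = (m+r).factorial := by
      exact_mod_cast congrArg (Nat.cast (R := ℝ)) hfac
    have hm : (m.factorial : ℝ) ≠ 0 := Nat.cast_ne_zero.mpr (Nat.factorial_ne_zero _)
    have hmr : ((m+r).factorial : ℝ) ≠ 0 := Nat.cast_ne_zero.mpr (Nat.factorial_ne_zero _)
    simp only [hh, Function.comp, pow_add]
    field_simp
    linear_combination u ^ m * u ^ r * hfacR
  rw [heq]
  exact (Real.summable_pow_div_factorial u).mul_left _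


/-- For integers `a ≥ 1`, `t ≥ 0` and reals `c > 0`, `f > 0`,
`∫_0^∞ x^{a+t/2-1} e^{-cx} I_t(2√(fx)) dx
  = ((t+a-1)!/c^{t/2+a}) (f/c)^{t/2} e^{f/c} ∑_{r=0}^{a-1} C(a-1,r)(f/c)^r/(t+r)!`. -/
theorem integral_rpow_exp_besselI (a t : ℕ) (ha : 1 ≤ a) (c f : ℝ)
    (hc : 0 < c) (hf : 0 < f) :
    ∫ x in Set.Ioi (0 : ℝ),
        x ^ ((a : ℝ) + (t : ℝ) / 2 - 1) * Real.exp (-c * x) *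
          besselI t (2 * Real.sqrt (f * x)) =
      (Nat.factorial (t + a - 1) : ℝ) / c ^ ((t : ℝ) / 2 + (a : ℝ)) *
        (f / c) ^ ((t : ℝ) / 2) * Real.exp (f / c) *
        ∑ r ∈ Finset.range a,
          (Nat.choose (a - 1) r : ℝ) * (f / c) ^ r / (Nat.factorial (t + r) : ℝ) := by
  set u : ℝ := f / c with hu
  set G : ℕ → ℝ → ℝ := fun k x =>
    f ^ ((t : ℝ) / 2 + (k : ℝ)) / (k.factorial * (t + k).factorial) *
      (x ^ (((t + a + k : ℕ) : ℝ) - 1) * Real.exp (-(c * x))) with hG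
  -- pointwise identification of the integrand with the series
  have hpt : ∀ x ∈ Set.Ioi (0 : ℝ),
      x ^ ((a : ℝ) + (t : ℝ) / 2 - 1) * Real.exp (-c * x) *
          besselI t (2 * Real.sqrt (f * x)) = ∑' k : ℕ, G k x := by
    intro x hx
    rw [Set.mem_Ioi] at hx
    have hfx : (0:ℝ) < f * x := mul_pos hf hx
    rw [besselI]
    have h2 : (2 : ℝ) * Real.sqrt (f * x) / 2 = Real.sqrt (f * x) := by ring
    rw [h2, ← tsum_mul_left]
    refine tsum_congr fun k => ?_
    have hsq : Real.sqrt (f * x) ^ (t + 2 * k) = (f * x) ^ (((t + 2 * k : ℕ) : ℝ) / 2) := by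
      rw [Real.sqrt_eq_rpow, ← Real.rpow_natCast ((f*x) ^ ((1:ℝ)/2)), ← Real.rpow_mul hfx.le]
      congr 1
      push_cast
      ring
    rw [hsq, Real.mul_rpow hf.le hx.le]
    have he : ((t + 2 * k : ℕ) : ℝ) / 2 = (t : ℝ) / 2 + (k : ℝ) := by push_cast; ring
    rw [he]
    have hxe : x ^ ((a : ℝ) + (t : ℝ) / 2 - 1) * x ^ ((t : ℝ) / 2 + (k : ℝ))
        = x ^ (((t + a + k : ℕ) : ℝ) - 1) := by
      rw [← Real.rpow_add hx]
      congr 1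
      push_cast
      ring
    rw [hG]
    simp only []
    rw [neg_mul, ← hxe]
    ring
  rw [setIntegral_congr_fun measurableSet_Ioi hpt]
  -- integrability of each term
  have hexp : ∀ k : ℕ, (-1 : ℝ) < ((t + a + k : ℕ) : ℝ) - 1 := by
    intro k
    have : (1:ℝ) ≤ ((t + a + k : ℕ) : ℝ) := by exact_mod_cast Nat.one_le_iff_ne_zero.mpr (by omega)
    linarith
  have hint : ∀ k : ℕ, IntegrableOn (G k) (Set.Ioi 0) := by
    intro k
    apply Integrable.const_mul
    have := integrableOn_rpow_mul_exp_neg_mul_rpow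
      (s := ((t + a + k : ℕ) : ℝ) - 1) (p := 1) (b := c) (hexp k) one_pos hc
    simpa [Real.rpow_one, neg_mul, IntegrableOn] using this
  -- value of each integral
  have hval : ∀ k : ℕ, ∫ x in Set.Ioi (0:ℝ), G k x
      = f ^ ((t : ℝ) / 2 + (k : ℝ)) / (k.factorial * (t + k).factorial) *
        ((1/c) ^ (t + a + k) * ((t + a + k - 1).factorial : ℝ)) := by
    intro k
    rw [hG]
    simp only []
    rw [integral_const_mul]
    have hG2 : ∫ x in Set.Ioi (0:ℝ), x ^ (((t + a + k : ℕ) : ℝ) - 1) * Real.exp (-(c * x))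
        = (1/c) ^ (((t + a + k : ℕ)) : ℝ) * Real.Gamma ((t + a + k : ℕ) : ℝ) := by
      have h0 : (0:ℝ) < ((t + a + k : ℕ) : ℝ) := by
        exact_mod_cast Nat.pos_of_ne_zero (by omega)
      exact Real.integral_rpow_mul_exp_neg_mul_Ioi h0 hc
    have hN : t + a + k = (t + a + k - 1) + 1 := by omega
    have hcast : ((t + a + k : ℕ) : ℝ) = ((t + a + k - 1 : ℕ) : ℝ) + 1 := by
      exact_mod_cast hN
    rw [hG2, Real.rpow_natCast, hcast, Real.Gamma_nat_eq_factorial]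
  -- nonnegativity: the norm integral equals the integral
  have hnorm : ∀ k : ℕ, ∫ x in Set.Ioi (0:ℝ), ‖G k x‖ = ∫ x in Set.Ioi (0:ℝ), G k x := by
    intro k
    refine setIntegral_congr_fun measurableSet_Ioi fun x hx => ?_
    rw [Set.mem_Ioi] at hx
    rw [Real.norm_of_nonneg]
    rw [hG]
    simp only []
    positivity
  -- rewrite the integral value as a finite sum
  set ψ : ℕ → ℕ → ℝ := fun r k =>
    (f ^ ((t : ℝ) / 2) * (1/c) ^ (t + a) * ((t + a - 1).factorial : ℝ) * ((a-1).choose r)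
      / ((t + r).factorial)) * (u ^ k * ((k.choose r : ℝ)) * r.factorial / k.factorial) with hψ
  have hFψ : ∀ k : ℕ, (∫ x in Set.Ioi (0:ℝ), G k x) = ∑ r ∈ Finset.range a, ψ r k := by
    intro k
    rw [hval k]
    have step : f ^ ((t : ℝ) / 2 + (k : ℝ)) / (k.factorial * (t + k).factorial) *
        ((1/c) ^ (t + a + k) * ((t + a + k - 1).factorial : ℝ))
        = (f ^ ((t : ℝ) / 2) * (1/c) ^ (t + a)) *
          (u ^ k * (((t + a + k - 1).factorial : ℝ) / (k.factorial * (t + k).factorial))) := by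
      rw [Real.rpow_add hf, Real.rpow_natCast, pow_add, hu, div_pow]
      have hcne : c ≠ 0 := ne_of_gt hc
      field_simp
      ring
    rw [step, coeff_id a t k ha, Finset.mul_sum, Finset.mul_sum]
    refine Finset.sum_congr rfl fun r hrm => ?_
    rw [hψ]
    ring
  -- summability of each ψ r and of the sums
  have hψsum : ∀ r ∈ Finset.range a, Summable (fun k => ψ r k) := by
    intro r _
    exact (summable_shift u r).mul_left _
  have hFsum : Summable (fun k => ∫ x in Set.Ioi (0:ℝ), G k x) := by
    have : (fun k => ∫ x in Set.Ioi (0:ℝ), G k x) = fun k => ∑ r ∈ Finset.range a, ψ r k := by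
      funext k; exact hFψ k
    rw [this]
    exact summable_sum hψsum
  -- interchange sum and integral
  rw [← integral_tsum_of_summable_integral_norm hint (by
    have : (fun k => ∫ x in Set.Ioi (0:ℝ), ‖G k x‖) = fun k => ∫ x in Set.Ioi (0:ℝ), G k x := by
      funext k; exact hnorm k
    rw [this]; exact hFsum)]
  -- evaluate the double sum
  calc ∑' k : ℕ, ∫ x in Set.Ioi (0:ℝ), G k x
      = ∑' k : ℕ, ∑ r ∈ Finset.range a, ψ r k := tsum_congr hFψ
    _ = ∑ r ∈ Finset.range a, ∑' k : ℕ, ψ r k := Summable.tsum_finsetSum hψsum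
    _ = ∑ r ∈ Finset.range a,
        (f ^ ((t : ℝ) / 2) * (1/c) ^ (t + a) * ((t + a - 1).factorial : ℝ) * ((a-1).choose r)
          / ((t + r).factorial)) * (u ^ r * Real.exp u) := by
        refine Finset.sum_congr rfl fun r _ => ?_
        rw [hψ]
        simp only []
        rw [tsum_mul_left, tsum_shift]
    _ = (Nat.factorial (t + a - 1) : ℝ) / c ^ ((t : ℝ) / 2 + (a : ℝ)) *
        (f / c) ^ ((t : ℝ) / 2) * Real.exp (f / c) *
        ∑ r ∈ Finset.range a,
          (Nat.choose (a - 1) r : ℝ) * (f / c) ^ r / (Nat.factorial (t + r) : ℝ) := by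
        rw [Finset.mul_sum]
        refine Finset.sum_congr rfl fun r _ => ?_
        have H : f ^ ((t : ℝ) / 2) * (1/c) ^ (t + a)
            = (f / c) ^ ((t : ℝ) / 2) / c ^ ((t : ℝ) / 2 + (a : ℝ)) := by
          rw [Real.div_rpow hf.le hc.le, Real.rpow_add hc, Real.rpow_natCast]
          have hct : c ^ ((t:ℝ)/2) * c ^ ((t:ℝ)/2) = (c : ℝ) ^ t := by
            rw [← Real.rpow_add hc, ← Real.rpow_natCast c t]
            norm_num
          have hcne : c ≠ 0 := ne_of_gt hc
          have hc2 : c ^ ((t:ℝ)/2) ≠ 0 := by positivity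
          have hca : (c:ℝ) ^ a ≠ 0 := by positivity
          rw [pow_add, one_div, inv_pow, inv_pow, ← hct, div_div]
          simp only [mul_inv, div_eq_mul_inv]
          ring
        rw [H, hu]
        ring
end

section
/- For positive integers m, n with m ≤ n, nonnegative integer τ = n - m, positive integers i, j ≤ m, and real x with 0 < x < 1, the series S₁(x) = ∑_{t=0}^∞ x^t (τ+t+i-1)!(τ+t+j-1)!/(t!(τ+t)!) converges and equals Γ(τ+i)·x^{i-1}/(1-x)^{τ+i+j-1} · ∑_{b=0}^{i-1} C(i-1,b)·((1-x)/x)^b · (τ+i-b)_{j-1}, where (a)_r denotes the Pochhammer symbol Γ(a+r)/Γ(a). -/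
/-- The Pochhammer symbol (rising factorial) `(a)_r = a(a+1)⋯(a+r-1)`, `(a)_0 = 1`. -/
noncomputable def poch (a : ℝ) (r : ℕ) : ℝ := ∏ k ∈ Finset.range r, (a + k)

lemma poch_succ (a : ℝ) (r : ℕ) : poch a (r+1) = poch a r * (a + r) :=
  Finset.prod_range_succ _ _

lemma fact_mul_poch (c r : ℕ) :
    (Nat.factorial c : ℝ) * poch ((c : ℝ) + 1) r = Nat.factorial (c + r) := by
  induction r with
  | zero => simp [poch]
  | succ r ih =>
      rw [poch_succ, ← mul_assoc, ih, show c + (r+1) = (c+r)+1 by omega,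
        Nat.factorial_succ]
      push_cast
      ring

lemma hasSum_shift {g : ℕ → ℝ} {S : ℝ} (h : HasSum (fun t => g (t+1)) S)
    (h0 : g 0 = 0) : HasSum g S := by
  refine (Function.Injective.hasSum_iff Nat.succ_injective ?_).mp h
  intro t ht
  have : t = 0 := by
    by_contra h'
    exact ht ⟨t - 1, by omega⟩
  simpa [this] using h0

lemma sum_pascal (y a : ℝ) (P : ℝ → ℝ) (i' : ℕ) :
    ∑ b ∈ Finset.range (i'+2), ((i'+1).choose b : ℝ) * y^b * P (a+1-b) =
      ∑ b ∈ Finset.range (i'+1), ((i').choose b : ℝ) * y^b * P (a+1-b) +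
      y * ∑ b ∈ Finset.range (i'+1), ((i').choose b : ℝ) * y^b * P (a-b) := by
  have harg : ∀ b : ℕ, a + 1 - ((b : ℝ)+1) = a - b := by intro b; ring
  rw [Finset.sum_range_succ' (fun b => ((i'+1).choose b : ℝ) * y^b * P (a+1-b)) (i'+1)]
  rw [Finset.sum_range_succ' (fun b => ((i').choose b : ℝ) * y^b * P (a+1-b)) i']
  have h1 : ∀ b ∈ Finset.range (i'+1),
      ((i'+1).choose (b+1) : ℝ) * y^(b+1) * P (a+1-((b:ℕ)+1 : ℕ)) =
      ((i').choose (b+1) : ℝ) * y^(b+1) * P (a-b) +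
        y * (((i').choose b : ℝ) * y^b * P (a-b)) := by
    intro b _
    rw [Nat.choose_succ_succ]
    push_cast
    rw [harg b]
    ring
  rw [Finset.sum_congr rfl h1, Finset.sum_add_distrib]
  rw [Finset.sum_range_succ (fun b => ((i').choose (b+1) : ℝ) * y^(b+1) * P (a-b)) i']
  simp only [Nat.choose_succ_self, Nat.cast_zero, zero_mul, add_zero]
  rw [Finset.mul_sum]
  push_cast
  simp only [harg]
  norm_num
  ring

lemma key (x : ℝ) (hx0 : 0 < x) (hx1 : x < 1) (j' : ℕ) (i' : ℕ) : ∀ τ : ℕ,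
    HasSum (fun t : ℕ =>
        x ^ t * (Nat.factorial (τ + t + i') : ℝ) * (Nat.factorial (τ + t + j') : ℝ) /
          ((Nat.factorial t : ℝ) * (Nat.factorial (τ + t) : ℝ)))
      (Real.Gamma ((τ : ℝ) + i' + 1) * x ^ i' / (1 - x) ^ (τ + i' + j' + 1) *
        ∑ b ∈ Finset.range (i' + 1),
          (Nat.choose i' b : ℝ) * ((1 - x) / x) ^ b * poch ((τ : ℝ) + i' + 1 - b) j') := by
  have hxabs : ‖x‖ < 1 := by rw [Real.norm_eq_abs, abs_of_pos hx0]; exact hx1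
  have hx1' : (1 : ℝ) - x ≠ 0 := by linarith
  have hxne : x ≠ 0 := ne_of_gt hx0
  induction i' with
  | zero =>
      intro τ
      have base := (hasSum_choose_mul_geometric_of_norm_lt_one (𝕜 := ℝ) (τ + j') hxabs).mul_left
        ((Nat.factorial (τ + j') : ℝ))
      convert base using 1
      · rfl
      · funext t
        have hc := Nat.add_choose_mul_factorial_mul_factorial t (τ + j')
        have hcR : ((t + (τ + j')).choose (τ + j') : ℝ) * (Nat.factorial t : ℝ) *
            (Nat.factorial (τ + j') : ℝ) = (Nat.factorial (τ + t + j') : ℝ) := by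
          rw [show τ + t + j' = t + (τ + j') by omega]
          exact_mod_cast congrArg (Nat.cast (R := ℝ)) hc
        have ht0 : (Nat.factorial t : ℝ) ≠ 0 := by positivity
        have ht1 : (Nat.factorial (τ + t) : ℝ) ≠ 0 := by positivity
        have ht2 : (Nat.factorial (τ + j') : ℝ) ≠ 0 := by positivity
        rw [show t + (τ + j') = t + τ + j' from by omega] at hcR
        rw [show τ + t + j' = t + τ + j' from by omega] at hcR
        simp only [Nat.add_zero]
        rw [show τ + t + j' = t + τ + j' from by omega, ← hcR,
          show t + (τ + j') = t + τ + j' from by omega]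
        field_simp
      · have hp := fact_mul_poch τ j'
        have hg : Real.Gamma ((τ:ℝ) + 1) = (Nat.factorial τ : ℝ) := by
          exact_mod_cast Real.Gamma_nat_eq_factorial τ
        rw [show τ + 0 + j' + 1 = τ + j' + 1 by omega]
        norm_num [Finset.sum_range_one, hg]
        rw [← hp]
        ring
  | succ i' IH =>
      intro τ
      have hG := IH τ
      have hH := (IH (τ + 1)).mul_left x
      -- shifted sum
      have hd : HasSum (fun t : ℕ => (t : ℝ) *
          (x ^ t * (Nat.factorial (τ + t + i') : ℝ) * (Nat.factorial (τ + t + j') : ℝ) /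
            ((Nat.factorial t : ℝ) * (Nat.factorial (τ + t) : ℝ))))
          (x * (Real.Gamma (((τ:ℕ)+1 : ℕ) + i' + 1) * x ^ i' / (1 - x) ^ ((τ+1) + i' + j' + 1) *
            ∑ b ∈ Finset.range (i' + 1),
              (Nat.choose i' b : ℝ) * ((1 - x) / x) ^ b *
                poch (((τ+1 : ℕ) : ℝ) + i' + 1 - b) j')) := by
        apply hasSum_shift
        · convert hH using 1
          rfl
          funext t
          have e1 : τ + (t+1) + i' = (τ+1) + t + i' := by omega
          have e2 : τ + (t+1) + j' = (τ+1) + t + j' := by omega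
          have e3 : τ + (t+1) = (τ+1) + t := by omega
          rw [e1, e2, e3, Nat.factorial_succ]
          have ht0 : (Nat.factorial t : ℝ) ≠ 0 := by positivity
          have ht1 : (Nat.factorial ((τ+1) + t) : ℝ) ≠ 0 := by positivity
          push_cast
          field_simp
          ring
        · simp
      have h1 := (hG.mul_left ((τ : ℝ) + i' + 1)).add hd
      convert h1 using 1
      · rfl
      · funext t
        have hfac : (Nat.factorial (τ + t + (i'+1)) : ℝ) =
            ((τ : ℝ) + t + i' + 1) * (Nat.factorial (τ + t + i') : ℝ) := by
          rw [show τ + t + (i'+1) = (τ + t + i') + 1 by omega, Nat.factorial_succ]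
          push_cast
          ring
        rw [hfac]
        ring
      · -- value algebra
        have hGamma : Real.Gamma ((τ:ℝ) + (i'+1 : ℕ) + 1) =
            ((τ:ℝ) + i' + 1) * Real.Gamma ((τ:ℝ) + i' + 1) := by
          rw [show ((τ:ℝ) + ((i'+1 : ℕ) : ℝ) + 1) = ((τ:ℝ) + i' + 1) + 1 by push_cast; ring]
          exact Real.Gamma_add_one (by positivity)
        have hps := sum_pascal ((1-x)/x) ((τ:ℝ) + i' + 1) (fun z => poch z j') i'
        have hsum1 : ∑ b ∈ Finset.range (i' + 1 + 1),
            (Nat.choose (i'+1) b : ℝ) * ((1 - x) / x) ^ b *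
              poch ((τ : ℝ) + ((i'+1 : ℕ) : ℝ) + 1 - b) j' =
            ∑ b ∈ Finset.range (i'+2), ((i'+1).choose b : ℝ) * ((1-x)/x)^b *
              poch ((τ:ℝ) + i' + 1 + 1 - b) j' := by
          apply Finset.sum_congr rfl
          intro b _
          congr 2
          push_cast
          ring
        have hsum2 : ∑ b ∈ Finset.range (i' + 1),
            (Nat.choose i' b : ℝ) * ((1 - x) / x) ^ b *
              poch (((τ+1 : ℕ) : ℝ) + i' + 1 - b) j' =
            ∑ b ∈ Finset.range (i'+1), ((i').choose b : ℝ) * ((1-x)/x)^b *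
              poch ((τ:ℝ) + i' + 1 + 1 - b) j' := by
          apply Finset.sum_congr rfl
          intro b _
          congr 2
          push_cast
          ring
        rw [hsum1, hps, hGamma, hsum2]
        rw [show τ + (i'+1) + j' + 1 = (τ + i' + j' + 1) + 1 by omega]
        rw [show (τ+1) + i' + j' + 1 = (τ + i' + j' + 1) + 1 by omega]
        rw [show Real.Gamma (((τ+1 : ℕ) : ℝ) + i' + 1) = Real.Gamma ((τ:ℝ) + i' + 1 + 1) from by
          norm_num [show (((τ+1 : ℕ) : ℝ)) = (τ:ℝ)+1 by push_cast; ring]; ring_nf]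
        rw [show Real.Gamma ((τ:ℝ) + i' + 1 + 1) = ((τ:ℝ) + i' + 1) * Real.Gamma ((τ:ℝ) + i' + 1)
          from Real.Gamma_add_one (by positivity)]
        rw [pow_succ, pow_succ]
        field_simp
        ring

/-- For `1 ≤ m ≤ n`, `τ = n - m`, `1 ≤ i, j ≤ m` and `0 < x < 1`, the series
`S₁(x) = ∑_{t=0}^∞ x^t (τ+t+i-1)!(τ+t+j-1)!/(t!(τ+t)!)` converges to
`Γ(τ+i) x^{i-1}/(1-x)^{τ+i+j-1} ∑_{b=0}^{i-1} C(i-1,b)((1-x)/x)^b (τ+i-b)_{j-1}`. -/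
theorem hasSum_S1 (m n : ℕ) (hm : 1 ≤ m) (hmn : m ≤ n) (τ : ℕ) (hτ : τ = n - m)
    (i j : ℕ) (hi1 : 1 ≤ i) (him : i ≤ m) (hj1 : 1 ≤ j) (hjm : j ≤ m)
    (x : ℝ) (hx0 : 0 < x) (hx1 : x < 1) :
    HasSum (fun t : ℕ =>
        x ^ t * (Nat.factorial (τ + t + i - 1) : ℝ) * (Nat.factorial (τ + t + j - 1) : ℝ) /
          ((Nat.factorial t : ℝ) * (Nat.factorial (τ + t) : ℝ)))
      (Real.Gamma (τ + i) * x ^ (i - 1) / (1 - x) ^ (τ + i + j - 1) *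
        ∑ b ∈ Finset.range i,
          (Nat.choose (i - 1) b : ℝ) * ((1 - x) / x) ^ b * poch ((τ : ℝ) + i - b) (j - 1)) := by
  obtain ⟨i', rfl⟩ : ∃ i', i = i' + 1 := ⟨i - 1, by omega⟩
  obtain ⟨j', rfl⟩ : ∃ j', j = j' + 1 := ⟨j - 1, by omega⟩
  have h := key x hx0 hx1 j' i' τ
  convert h using 1
  rfl
  rw [show ((τ:ℝ) + ((i'+1:ℕ):ℝ)) = (τ:ℝ) + i' + 1 from by push_cast; ring,
    show τ + (i'+1) + (j'+1) - 1 = τ + i' + j' + 1 from by omega]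
  simp
end
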